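/- A disjoint union ∐_{s∈S} X_s of a family {(X_s,d_s)}_{s∈S} of metric spaces equipped with a metric d whose restriction to each X_s equals d_s is a coarse disjoint union of the family if and only if the following two conditions hold: (i) for every sequence {x_n}_{n≥1} of points of ∐_{s∈S} X_s belonging to pairwise different parts X_s one has d(a, x_n) → ∞ for every point a of the union; and (ii) for every M > 0 and every sequence of pairs (x_n, y_n), n ≥ 1, of points of ∐_{s∈S} X_s with d(x_n, y_n) < M for all n and d(a, x_n) → ∞ for some point a, there is k ≥ 1 such that for each n ≥ k there is an index s ∈ S with x_n, y_n ∈ X_s. -/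

import Mathlib

/-- A metric space structure on the disjoint union `Σ s, X s` is a *coarse disjoint union*
of the family `{(X s, d_s)}` if its distance restricts to the distance of each part, and
for every `M > 0` there are bounded subsets `B s ⊆ X s`, all but finitely many of them empty,
such that points of distinct parts lying outside the `B s` are at distance `> M`. -/
def IsCoarseDisjointUnion {S : Type*} (X : S → Type*) [∀ s, MetricSpace (X s)]
    [MetricSpace (Σ s, X s)] : Prop :=
  (∀ (s : S) (x y : X s), dist (⟨s, x⟩ : Σ s, X s) ⟨s, y⟩ = dist x y) ∧
  ∀ M : ℝ, M > 0 → ∃ B : ∀ s, Set (X s),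
    (∀ s, Bornology.IsBounded (B s)) ∧
    {s | B s ≠ ∅}.Finite ∧
    ∀ (s t : S) (x : X s) (y : X t), s ≠ t → x ∉ B s → y ∉ B t →
      dist (⟨s, x⟩ : Σ s, X s) ⟨t, y⟩ > M

/-- Proposition 3.4: a disjoint union `Σ s, X s` equipped with a metric restricting to each
`d_s` is a coarse disjoint union if and only if (i) every sequence of points lying in pairwise
different parts diverges to infinity, and (ii) for every `M > 0`, any sequence of pairs at
distance `< M` whose first coordinates diverge to infinity eventually has both members of each
pair in a common part. -/
theorem coarseDisjointUnion_iff {S : Type*} (X : S → Type*) [∀ s, MetricSpace (X s)]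
    [MetricSpace (Σ s, X s)]
    (hres : ∀ (s : S) (x y : X s), dist (⟨s, x⟩ : Σ s, X s) ⟨s, y⟩ = dist x y) :
    IsCoarseDisjointUnion X ↔
      ((∀ x : ℕ → Σ s, X s, Function.Injective (fun n => (x n).1) →
          ∀ a : Σ s, X s,
            Filter.Tendsto (fun n => dist a (x n)) Filter.atTop Filter.atTop) ∧
        (∀ M : ℝ, M > 0 → ∀ x y : ℕ → Σ s, X s,
          (∀ n, dist (x n) (y n) < M) →
          (∃ a : Σ s, X s,
            Filter.Tendsto (fun n => dist a (x n)) Filter.atTop Filter.atTop) →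
          ∃ k : ℕ, ∀ n ≥ k, (x n).1 = (y n).1)) := by
  classical
  have hiso : ∀ s : S, Isometry (Sigma.mk s : X s → Σ s, X s) :=
    fun s => Isometry.of_dist_eq (hres s)
  constructor
  · rintro ⟨-, hB⟩
    constructor
    · -- (i)
      intro x hinj a
      rw [Filter.tendsto_atTop]
      by_contra hcon
      push_neg at hcon
      obtain ⟨b, hb⟩ := hcon
      have hb' : ∃ᶠ n in Filter.atTop, dist a (x n) < b := by
        simpa using hb
      obtain ⟨B, hbd, hfin, hsep⟩ := hB (2 * |b| + 1) (by positivity)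
      have hNfin : ((fun n => (x n).1) ⁻¹' {s | B s ≠ ∅}).Finite :=
        Set.Finite.preimage hinj.injOn hfin
      have hev : ∀ᶠ n in Filter.atTop, (x n).1 ∉ {s | B s ≠ ∅} := by
        rw [← Nat.cofinite_eq_atTop]
        exact Set.Finite.eventually_cofinite_notMem hNfin
      have hfr := Filter.frequently_atTop.mp (hb'.and_eventually hev)
      obtain ⟨n, -, hnb, hnB⟩ := hfr 0
      obtain ⟨m, hm, hmb, hmB⟩ := hfr (n + 1)
      have hne : (x n).1 ≠ (x m).1 := by
        intro h
        have := hinj h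
        omega
      have hxnB : (x n).2 ∉ B (x n).1 := by
        have : B (x n).1 = ∅ := not_not.mp hnB
        simp [this]
      have hxmB : (x m).2 ∉ B (x m).1 := by
        have : B (x m).1 = ∅ := not_not.mp hmB
        simp [this]
      have hgt : dist (x n) (x m) > 2 * |b| + 1 :=
        hsep (x n).1 (x m).1 (x n).2 (x m).2 hne hxnB hxmB
      have htri : dist (x n) (x m) ≤ dist a (x n) + dist a (x m) :=
        dist_triangle_left _ _ _
      have hab : b ≤ |b| := le_abs_self b
      linarith
    · -- (ii)
      rintro M hM x y hxy ⟨a, ha⟩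
      obtain ⟨B, hbd, hfin, hsep⟩ := hB M hM
      set U : Set (Σ s, X s) := ⋃ s ∈ {s | B s ≠ ∅}, Sigma.mk s '' B s with hU
      have hUbd : Bornology.IsBounded U :=
        (Bornology.isBounded_biUnion hfin).mpr
          (fun s _ => (hiso s).lipschitz.isBounded_image (hbd s))
      obtain ⟨R, hR⟩ := (Metric.isBounded_iff_subset_closedBall a).mp hUbd
      have hmemU : ∀ z : Σ s, X s, z.2 ∈ B z.1 → z ∈ U := by
        intro z hz
        refine Set.mem_biUnion (x := z.1) ?_ ⟨z.2, hz, rfl⟩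
        exact fun h => (h ▸ hz : z.2 ∈ (∅ : Set (X z.1)))
      have hev := (ha.eventually_gt_atTop (R + M))
      obtain ⟨k, hk⟩ := Filter.eventually_atTop.mp hev
      refine ⟨k, fun n hn => ?_⟩
      by_contra hne
      have hxn : (x n).2 ∉ B (x n).1 := by
        intro h
        have : dist (x n) a ≤ R := hR (hmemU _ h)
        have := hk n hn
        rw [dist_comm] at this
        linarith
      have hyn : (y n).2 ∉ B (y n).1 := by
        intro h
        have h1 : dist (y n) a ≤ R := hR (hmemU _ h)
        have h2 : R + M < dist a (x n) := hk n hn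
        have h3 : dist a (x n) ≤ dist a (y n) + dist (y n) (x n) := dist_triangle _ _ _
        have h4 : dist (y n) (x n) = dist (x n) (y n) := dist_comm _ _
        have h5 : dist a (y n) = dist (y n) a := dist_comm _ _
        have := hxy n
        linarith
      have hgt : dist (x n) (y n) > M :=
        hsep (x n).1 (y n).1 (x n).2 (y n).2 hne hxn hyn
      exact absurd (hxy n) (not_lt.mpr hgt.le)
  · rintro ⟨h1, h2⟩
    refine ⟨hres, fun M hM => ?_⟩
    refine ⟨fun s => {x : X s | ∃ t, t ≠ s ∧ ∃ y : X t,
        dist (⟨s, x⟩ : Σ s, X s) ⟨t, y⟩ ≤ M}, ?_, ?_, ?_⟩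
    · -- boundedness
      intro s
      show Bornology.IsBounded {x : X s | ∃ t, t ≠ s ∧ ∃ y : X t,
        dist (⟨s, x⟩ : Σ s, X s) ⟨t, y⟩ ≤ M}
      by_contra hub
      have hne : {x : X s | ∃ t, t ≠ s ∧ ∃ y : X t,
          dist (⟨s, x⟩ : Σ s, X s) ⟨t, y⟩ ≤ M}.Nonempty := by
        by_contra h
        rw [Set.not_nonempty_iff_eq_empty] at h
        exact hub (by rw [h]; exact Bornology.isBounded_empty)
      obtain ⟨c, hc⟩ := hne
      have hex : ∀ n : ℕ, ∃ x, (∃ t, t ≠ s ∧ ∃ y : X t,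
          dist (⟨s, x⟩ : Σ s, X s) ⟨t, y⟩ ≤ M) ∧ (n : ℝ) < dist c x := by
        intro n
        by_contra h
        push_neg at h
        refine hub ((Metric.isBounded_closedBall (x := c) (r := n)).subset ?_)
        intro z hz
        rw [Metric.mem_closedBall, dist_comm]
        exact h z hz
      choose ξ hξ hd using hex
      choose t ht yy hyy using hξ
      have htd : Filter.Tendsto (fun n => dist (⟨s, c⟩ : Σ s, X s) ⟨s, ξ n⟩)
          Filter.atTop Filter.atTop := by
        refine Filter.tendsto_atTop_mono (fun n => ?_) tendsto_natCast_atTop_atTop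
        rw [hres]
        exact (hd n).le
      obtain ⟨k, hk⟩ := h2 (M + 1) (by linarith) (fun n => ⟨s, ξ n⟩)
        (fun n => ⟨t n, yy n⟩) (fun n => lt_of_le_of_lt (hyy n) (by linarith))
        ⟨⟨s, c⟩, htd⟩
      exact ht k (hk k le_rfl).symm
    · -- finiteness
      by_contra hinf
      have hinf' : {s | {x : X s | ∃ t, t ≠ s ∧ ∃ y : X t,
          dist (⟨s, x⟩ : Σ s, X s) ⟨t, y⟩ ≤ M} ≠ ∅}.Infinite := hinf
      have e := Set.Infinite.natEmbedding _ hinf' 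
      set σ : ℕ → S := fun n => (e n).1 with hσ
      have hσinj : Function.Injective σ := fun a b h => e.injective (Subtype.ext h)
      have hne : ∀ n, ∃ x, x ∈ {x : X (σ n) | ∃ t, t ≠ σ n ∧ ∃ y : X t,
          dist (⟨σ n, x⟩ : Σ s, X s) ⟨t, y⟩ ≤ M} :=
        fun n => Set.nonempty_iff_ne_empty.mpr (e n).2
      choose ξ hξ using hne
      choose t ht yy hyy using hξ
      have htd := h1 (fun n => ⟨σ n, ξ n⟩) hσinj ⟨σ 0, ξ 0⟩
      obtain ⟨k, hk⟩ := h2 (M + 1) (by linarith) (fun n => ⟨σ n, ξ n⟩)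
        (fun n => ⟨t n, yy n⟩) (fun n => lt_of_le_of_lt (hyy n) (by linarith))
        ⟨⟨σ 0, ξ 0⟩, htd⟩
      exact ht k (hk k le_rfl).symm
    · -- separation
      intro s t xx yy hst hx hy
      by_contra h
      push_neg at h
      exact hx ⟨t, hst.symm, yy, h⟩
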